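/- Let Ω be a countable type, let m_a and m_b be σ-algebras on Ω, and let μ_a and μ_b be probability measures with respect to m_a and m_b respectively, satisfying: μ_a(E) · μ_b(F) = 0 for all m_a-measurable E and m_b-measurable F with E ∩ F = ∅. Let E_a be m_a-measurable, E_b be m_b-measurable, and let (A_i)_{i∈ℕ} be m_a-measurable sets and (B_i)_{i∈ℕ} be m_b-measurable sets such that the sets A_i ∩ B_i are pairwise disjoint and E_a ∩ E_b = ⋃_{i∈ℕ} (A_i ∩ B_i). Then μ_a(E_a) · μ_b(E_b) = ∑_{i∈ℕ} μ_a(A_i) · μ_b(B_i). -/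

import Mathlib

open MeasureTheory Set
open scoped Classical

section Atoms

variable {Ω : Type*}

/-- A measurable set containing `x` but not `z`, if one exists. -/
noncomputable def sepSet (m : MeasurableSpace Ω) (x z : Ω) : Set Ω :=
  if h : ∃ E, MeasurableSet[m] E ∧ x ∈ E ∧ z ∉ E then h.choose else Set.univ

lemma sepSet_measurable (m : MeasurableSpace Ω) (x z : Ω) :
    MeasurableSet[m] (sepSet m x z) := by
  unfold sepSet
  split_ifs with h
  · exact h.choose_spec.1
  · exact MeasurableSet.univ

lemma mem_sepSet_self (m : MeasurableSpace Ω) (x z : Ω) : x ∈ sepSet m x z := by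
  unfold sepSet
  split_ifs with h
  · exact h.choose_spec.2.1
  · exact Set.mem_univ x

lemma not_mem_sepSet (m : MeasurableSpace Ω) {x z : Ω}
    (h : ∃ E, MeasurableSet[m] E ∧ x ∈ E ∧ z ∉ E) : z ∉ sepSet m x z := by
  unfold sepSet
  rw [dif_pos h]
  exact h.choose_spec.2.2

/-- The atom of the σ-algebra `m` containing `x`. -/
def atomOf (m : MeasurableSpace Ω) (x : Ω) : Set Ω := ⋂ z, sepSet m x z

lemma atomOf_measurable [Countable Ω] (m : MeasurableSpace Ω) (x : Ω) :
    MeasurableSet[m] (atomOf m x) :=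
  MeasurableSet.iInter fun z => sepSet_measurable m x z

lemma mem_atomOf_self (m : MeasurableSpace Ω) (x : Ω) : x ∈ atomOf m x :=
  mem_iInter.2 fun z => mem_sepSet_self m x z

lemma mem_of_mem_atomOf {m : MeasurableSpace Ω} {x y : Ω} (hy : y ∈ atomOf m x)
    {E : Set Ω} (hE : MeasurableSet[m] E) (hx : x ∈ E) : y ∈ E := by
  by_contra hyE
  exact not_mem_sepSet m ⟨E, hE, hx, hyE⟩ (mem_iInter.1 hy y)

lemma iff_of_mem_atomOf {m : MeasurableSpace Ω} {x y : Ω} (hy : y ∈ atomOf m x)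
    {E : Set Ω} (hE : MeasurableSet[m] E) : x ∈ E ↔ y ∈ E := by
  constructor
  · exact mem_of_mem_atomOf hy hE
  · intro hyE
    by_contra hxE
    exact mem_of_mem_atomOf hy hE.compl hxE hyE

/-- Membership in a product-measurable set only depends on the atoms of the coordinates. -/
lemma prod_mem_congr (ma mb : MeasurableSpace Ω) {S : Set (Ω × Ω)}
    (hS : MeasurableSet[@Prod.instMeasurableSpace Ω Ω ma mb] S)
    {x y x' y' : Ω} (hx : x' ∈ atomOf ma x) (hy : y' ∈ atomOf mb y) :
    (x, y) ∈ S ↔ (x', y') ∈ S := by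
  let m' : MeasurableSpace (Ω × Ω) :=
    { MeasurableSet' := fun T => ∀ a a' b b', a' ∈ atomOf ma a → b' ∈ atomOf mb b →
        ((a, b) ∈ T ↔ (a', b') ∈ T)
      measurableSet_empty := fun a a' b b' _ _ => Iff.rfl
      measurableSet_compl := fun T hT a a' b b' ha hb => by
        simp only [Set.mem_compl_iff]
        exact not_congr (hT a a' b b' ha hb)
      measurableSet_iUnion := fun f hf a a' b b' ha hb => by
        simp only [Set.mem_iUnion]
        exact exists_congr fun i => hf i a a' b b' ha hb }
  have hle : (@Prod.instMeasurableSpace Ω Ω ma mb) ≤ m' := by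
    refine sup_le ?_ ?_
    · rintro T ⟨E, hE, rfl⟩ a a' b b' ha hb
      simpa using iff_of_mem_atomOf ha hE
    · rintro T ⟨E, hE, rfl⟩ a a' b b' ha hb
      simpa using iff_of_mem_atomOf hb hE
  exact hle S hS x x' y y' hx hy

/-- Any product-measurable set disjoint from the diagonal is null for the product measure. -/
lemma null_of_forall_not_diag [Countable Ω] (ma mb : MeasurableSpace Ω)
    (μa : @Measure Ω ma) (μb : @Measure Ω mb)
    (hpb : @IsProbabilityMeasure Ω mb μb)
    (h0 : ∀ E F : Set Ω, MeasurableSet[ma] E → MeasurableSet[mb] F →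
      E ∩ F = ∅ → μa E * μb F = 0)
    {S : Set (Ω × Ω)} (hS : MeasurableSet[@Prod.instMeasurableSpace Ω Ω ma mb] S)
    (hdiag : ∀ x, (x, x) ∉ S) :
    @Measure.prod Ω Ω ma mb μa μb S = 0 := by
  haveI := hpb
  have hsub : S ⊆ ⋃ p : Ω × Ω, ⋃ _ : p ∈ S, atomOf ma p.1 ×ˢ atomOf mb p.2 := by
    intro p hp
    exact mem_iUnion.2 ⟨p, mem_iUnion.2 ⟨hp,
      ⟨mem_atomOf_self ma p.1, mem_atomOf_self mb p.2⟩⟩⟩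
  refine le_antisymm ?_ zero_le
  refine le_trans (measure_mono hsub) (le_of_eq (measure_iUnion_null fun p => ?_))
  by_cases hp : p ∈ S
  · simp only [hp, iUnion_true]
    have hsf : @SFinite Ω mb μb := inferInstance
    rw [@Measure.prod_prod Ω Ω ma mb μa μb hsf]
    refine h0 _ _ (atomOf_measurable ma p.1) (atomOf_measurable mb p.2) ?_
    ext z
    simp only [Set.mem_inter_iff, Set.mem_empty_iff_false, iff_false, not_and]
    intro hz1 hz2
    exact hdiag z ((prod_mem_congr ma mb hS hz1 hz2).1 hp)
  · simp [hp]

end Atoms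

/-- Countable additivity of the independent-product set function: if `Ea ∩ Eb` is the
disjoint union of the intersections `A i ∩ B i`, then
`μa Ea * μb Eb = ∑ᵢ μa (A i) * μb (B i)`. -/
theorem independent_product_countably_additive
    {Ω : Type*} [Countable Ω]
    (ma mb : MeasurableSpace Ω)
    (μa : @Measure Ω ma) (μb : @Measure Ω mb)
    (hpa : @IsProbabilityMeasure Ω ma μa) (hpb : @IsProbabilityMeasure Ω mb μb)
    (h0 : ∀ E F : Set Ω, MeasurableSet[ma] E → MeasurableSet[mb] F →
      E ∩ F = ∅ → μa E * μb F = 0)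
    (Ea Eb : Set Ω) (hEa : MeasurableSet[ma] Ea) (hEb : MeasurableSet[mb] Eb)
    (A : ℕ → Set Ω) (B : ℕ → Set Ω)
    (hA : ∀ i, MeasurableSet[ma] (A i)) (hB : ∀ i, MeasurableSet[mb] (B i))
    (hdisj : Pairwise (Function.onFun Disjoint (fun i => A i ∩ B i)))
    (hunion : Ea ∩ Eb = ⋃ i, A i ∩ B i) :
    μa Ea * μb Eb = ∑' i, μa (A i) * μb (B i) := by
  haveI := hpa
  haveI := hpb
  set π := @Measure.prod Ω Ω ma mb μa μb with hπ
  have hsf : @SFinite Ω mb μb := inferInstance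
  have hrect : ∀ (E F : Set Ω), π (E ×ˢ F) = μa E * μb F := fun E F =>
    @Measure.prod_prod Ω Ω ma mb μa μb hsf E F
  have hmR : ∀ i, MeasurableSet[@Prod.instMeasurableSpace Ω Ω ma mb] (A i ×ˢ B i) :=
    fun i => (hA i).prod (hB i)
  have hmE : MeasurableSet[@Prod.instMeasurableSpace Ω Ω ma mb] (Ea ×ˢ Eb) :=
    hEa.prod hEb
  -- the part of the big rectangle outside the union of small rectangles is null
  have hnull1 : π ((Ea ×ˢ Eb) \ ⋃ i, A i ×ˢ B i) = 0 := by
    refine null_of_forall_not_diag ma mb μa μb hpb h0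
      (hmE.diff (MeasurableSet.iUnion hmR)) fun x hx => ?_
    have hx1 : x ∈ Ea ∩ Eb := ⟨hx.1.1, hx.1.2⟩
    rw [hunion] at hx1
    obtain ⟨i, hi⟩ := Set.mem_iUnion.1 hx1
    exact hx.2 (Set.mem_iUnion.2 ⟨i, hi.1, hi.2⟩)
  have hnull2 : ∀ i, π ((A i ×ˢ B i) \ (Ea ×ˢ Eb)) = 0 := by
    intro i
    refine null_of_forall_not_diag ma mb μa μb hpb h0
      ((hmR i).diff hmE) fun x hx => ?_
    have hx1 : x ∈ Ea ∩ Eb := by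
      rw [hunion]; exact Set.mem_iUnion.2 ⟨i, hx.1.1, hx.1.2⟩
    exact hx.2 ⟨hx1.1, hx1.2⟩
  have hnull3 : ∀ i j, i ≠ j → π ((A i ×ˢ B i) ∩ (A j ×ˢ B j)) = 0 := by
    intro i j hij
    refine null_of_forall_not_diag ma mb μa μb hpb h0
      ((hmR i).inter (hmR j)) fun x hx => ?_
    exact Set.disjoint_left.1 (hdisj hij) ⟨hx.1.1, hx.1.2⟩ ⟨hx.2.1, hx.2.2⟩
  have haeeq : (Ea ×ˢ Eb) =ᵐ[π] ⋃ i, A i ×ˢ B i := by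
    rw [MeasureTheory.ae_eq_set]
    refine ⟨hnull1, ?_⟩
    rw [Set.iUnion_diff]
    exact measure_iUnion_null hnull2
  calc μa Ea * μb Eb = π (Ea ×ˢ Eb) := (hrect _ _).symm
    _ = π (⋃ i, A i ×ˢ B i) := measure_congr haeeq
    _ = ∑' i, π (A i ×ˢ B i) :=
        measure_iUnion₀ (fun i j hij => hnull3 i j hij) fun i => (hmR i).nullMeasurableSet
    _ = ∑' i, μa (A i) * μb (B i) := tsum_congr fun i => hrect _ _
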